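/- Let P be a non-empty set of primes, so that λ_P : ℕ → {±1} is a non-constant completely multiplicative function, and let H = {h₁,…,h_d} be a non-empty finite set of non-negative integers. Then liminf_{x→∞} (1/x) Σ_{n≤x} λ_P(n+h₁)⋯λ_P(n+h_d) < 1 and limsup_{x→∞} (1/x) Σ_{n≤x} λ_P(n+h₁)⋯λ_P(n+h_d) > -1. -/

import Mathlib

open Filter Topology Polynomial
open scoped symmDiff Classical

/-- `Ω_P(n)`: number of prime factors of `n` (with multiplicity) lying in `P`. -/
noncomputable def OmegaP (P : Set ℕ) (n : ℕ) : ℕ :=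
  n.factorization.sum fun p k => if p ∈ P then k else 0

/-- `λ_P`, the completely multiplicative function equal to `-1` at primes in `P`
and `1` at all other primes. -/
noncomputable def lambdaP (P : Set ℕ) (n : ℕ) : ℝ :=
  (-1 : ℝ) ^ OmegaP P n

/-- `Λ_P^H(n) = ∏_{h ∈ H} λ_P(n + h)` (empty product is `1`). -/
noncomputable def LambdaPH (P : Set ℕ) (H : Finset ℕ) (n : ℕ) : ℝ :=
  ∏ h ∈ H, lambdaP P (n + h)

/-- `N_P^H = {n : Λ_P^H(n) = -1}`. -/
def NPH (P : Set ℕ) (H : Finset ℕ) : Set ℕ :=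
  {n : ℕ | LambdaPH P H n = -1}

/-- Number of elements of `A` in `[1, x]`. -/
noncomputable def countIn (A : Set ℕ) (x : ℕ) : ℕ :=
  ((Finset.Icc 1 x).filter (fun n => n ∈ A)).card

/-- `A ⊆ ℕ` has natural density `d`: `|A ∩ [1,x]|/x → d`. -/
def HasDensity (A : Set ℕ) (d : ℝ) : Prop :=
  Filter.Tendsto (fun x : ℕ => (countIn A x : ℝ) / x) Filter.atTop (nhds d)

/-- The Cesàro average `(1/x) ∑_{n ≤ x} Λ_P^H(n)`. -/
noncomputable def cesaroAvg (P : Set ℕ) (H : Finset ℕ) (x : ℕ) : ℝ :=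
  (∑ n ∈ Finset.Icc 1 x, LambdaPH P H n) / x

/-- A set of naturals is small if the sum of reciprocals of its elements converges. -/
def SmallSet (P : Set ℕ) : Prop :=
  Summable fun p : P => (1 : ℝ) / (p : ℝ)

/-- `C(r,s) = {n : n ≡ -r (mod s)}`. -/
def Cset (r s : ℕ) : Set ℕ :=
  {n : ℕ | (n : ℤ) ≡ -(r : ℤ) [ZMOD (s : ℤ)]}

/-- The set of `P`-smooth positive integers. -/
def SmoothP (P : Set ℕ) : Set ℕ :=
  {n : ℕ | 0 < n ∧ ∀ p : ℕ, p.Prime → p ∣ n → p ∈ P}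

/-- `𝒜_P`: all finite unions of sets from `{∅} ∪ {C(r,n) : r ∈ ℕ, n ∈ S_P}`. -/
def calA (P : Set ℕ) : Set (Set ℕ) :=
  {A : Set ℕ | ∃ F : Finset (ℕ × ℕ), (∀ q ∈ F, q.2 ∈ SmoothP P) ∧
    A = ⋃ q ∈ F, Cset q.1 q.2}


private lemma lambdaP_cases (P : Set ℕ) (n : ℕ) : lambdaP P n = 1 ∨ lambdaP P n = -1 := by
  unfold lambdaP
  rcases Nat.even_or_odd (OmegaP P n) with h | h
  · exact Or.inl h.neg_one_pow
  · exact Or.inr h.neg_one_pow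

private lemma lambdaP_sq (P : Set ℕ) (n : ℕ) : lambdaP P n * lambdaP P n = 1 := by
  rcases lambdaP_cases P n with h | h <;> rw [h] <;> norm_num

private lemma LambdaPH_cases (P : Set ℕ) (H : Finset ℕ) (n : ℕ) :
    LambdaPH P H n = 1 ∨ LambdaPH P H n = -1 := by
  unfold LambdaPH
  refine Finset.prod_induction _ (fun x => x = 1 ∨ x = -1) ?_ (Or.inl rfl)
    (fun h _ => lambdaP_cases P _)
  rintro a b (rfl | rfl) (rfl | rfl) <;> norm_num

private lemma binomial_aux (f : Polynomial (ZMod 2)) (hmonic : f.Monic) (c₁ c₂ : ℕ)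
    (hlt : c₁ < c₂) (heq : (X ^ c₁ %ₘ f : Polynomial (ZMod 2)) = X ^ c₂ %ₘ f) :
    ∃ a c : ℕ, 1 ≤ c ∧ ∃ g : Polynomial (ZMod 2), f * g = X ^ a + X ^ (a + c) := by
  refine ⟨c₁, c₂ - c₁, by omega, (X ^ c₂ /ₘ f) - (X ^ c₁ /ₘ f), ?_⟩
  have h1 := Polynomial.modByMonic_add_div (X ^ c₁ : Polynomial (ZMod 2)) f
  have h2 := Polynomial.modByMonic_add_div (X ^ c₂ : Polynomial (ZMod 2)) f
  have hkey : f * (X ^ c₂ /ₘ f - X ^ c₁ /ₘ f) = X ^ c₂ - X ^ c₁ := by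
    linear_combination h2 - h1 + heq
  rw [hkey, CharTwo.sub_eq_add]
  have : c₁ + (c₂ - c₁) = c₂ := by omega
  rw [this, add_comm]

private lemma exists_binomial_mul (f : Polynomial (ZMod 2)) (hf : f ≠ 0) :
    ∃ a c : ℕ, 1 ≤ c ∧ ∃ g : Polynomial (ZMod 2),
      f * g = X ^ a + X ^ (a + c) := by
  have hone : ∀ a : ZMod 2, a ≠ 0 → a = 1 := by decide
  have hmonic : f.Monic := hone _ (Polynomial.leadingCoeff_ne_zero.mpr hf)
  have hfin : ∃ c₁ c₂ : ℕ, c₁ ≠ c₂ ∧ (X ^ c₁ %ₘ f : Polynomial (ZMod 2)) = X ^ c₂ %ₘ f := by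
    obtain ⟨c₁, c₂, hne, heq⟩ := Finite.exists_ne_map_eq_of_infinite
      (fun c : ℕ => fun i : Fin f.natDegree => ((X : Polynomial (ZMod 2)) ^ c %ₘ f).coeff i)
    refine ⟨c₁, c₂, hne, ?_⟩
    ext j
    by_cases hj : j < f.natDegree
    · exact congrFun heq ⟨j, hj⟩
    · have hdeg : ∀ c : ℕ, ((X : Polynomial (ZMod 2)) ^ c %ₘ f).coeff j = 0 := by
        intro c
        apply Polynomial.coeff_eq_zero_of_degree_lt
        calc ((X : Polynomial (ZMod 2)) ^ c %ₘ f).degree < f.degree :=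
              Polynomial.degree_modByMonic_lt _ hmonic
          _ = (f.natDegree : WithBot ℕ) := Polynomial.degree_eq_natDegree hf
          _ ≤ (j : WithBot ℕ) := by exact_mod_cast Nat.cast_le.mpr (le_of_not_gt hj)
      rw [hdeg c₁, hdeg c₂]
  obtain ⟨c₁, c₂, hne, heq⟩ := hfin
  rcases lt_or_gt_of_ne hne with hlt | hlt
  · exact binomial_aux f hmonic c₁ c₂ hlt heq
  · exact binomial_aux f hmonic c₂ c₁ hlt heq.symm

noncomputable def LamProd (P : Set ℕ) (q : Polynomial (ZMod 2)) (n : ℕ) : ℝ :=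
  ∏ j ∈ q.support, lambdaP P (n + j)

private lemma support_add_char2 (q r : Polynomial (ZMod 2)) :
    (q + r).support = q.support ∆ r.support := by
  ext j
  simp only [Polynomial.mem_support_iff, Polynomial.coeff_add, Finset.mem_symmDiff]
  have : ∀ a b : ZMod 2, a + b ≠ 0 ↔ (a ≠ 0 ∧ ¬b ≠ 0) ∨ (b ≠ 0 ∧ ¬a ≠ 0) := by decide
  exact this _ _

private lemma LamProd_add (P : Set ℕ) (q r : Polynomial (ZMod 2)) (n : ℕ) :
    LamProd P (q + r) n = LamProd P q n * LamProd P r n := by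
  unfold LamProd
  rw [support_add_char2]
  set A := q.support
  set B := r.support
  have h1 : (∏ j ∈ A ∪ B, lambdaP P (n + j)) * ∏ j ∈ A ∩ B, lambdaP P (n + j)
      = (∏ j ∈ A, lambdaP P (n + j)) * ∏ j ∈ B, lambdaP P (n + j) :=
    Finset.prod_union_inter
  have h2 : A ∪ B = (A ∆ B) ∪ (A ∩ B) := (symmDiff_sup_inf A B).symm
  have h3 : Disjoint (A ∆ B) (A ∩ B) := disjoint_symmDiff_inf A B
  rw [h2, Finset.prod_union h3] at h1
  have h4 : (∏ j ∈ A ∩ B, lambdaP P (n + j)) * ∏ j ∈ A ∩ B, lambdaP P (n + j) = 1 := by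
    rw [← Finset.prod_mul_distrib]
    rw [Finset.prod_congr rfl fun j _ => lambdaP_sq P (n + j)]
    exact Finset.prod_const_one
  calc ∏ j ∈ A ∆ B, lambdaP P (n + j)
      = (∏ j ∈ A ∆ B, lambdaP P (n + j)) *
        ((∏ j ∈ A ∩ B, lambdaP P (n + j)) * ∏ j ∈ A ∩ B, lambdaP P (n + j)) := by
        rw [h4, mul_one]
    _ = ((∏ j ∈ A ∆ B, lambdaP P (n + j)) * ∏ j ∈ A ∩ B, lambdaP P (n + j)) *
        ∏ j ∈ A ∩ B, lambdaP P (n + j) := by ring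
    _ = (∏ j ∈ A, lambdaP P (n + j)) * ∏ j ∈ B, lambdaP P (n + j) := h1

private lemma LamProd_mul_X_pow (P : Set ℕ) (q : Polynomial (ZMod 2)) (k n : ℕ) :
    LamProd P (q * X ^ k) n = LamProd P q (n + k) := by
  unfold LamProd
  have hs : (q * X ^ k).support = q.support.image (· + k) := by
    ext j
    simp only [Polynomial.mem_support_iff, Finset.mem_image, Polynomial.coeff_mul_X_pow']
    constructor
    · intro hj
      by_cases hk : k ≤ j
      · rw [if_pos hk] at hj
        exact ⟨j - k, hj, by omega⟩
      · rw [if_neg hk] at hj; exact absurd rfl hj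
    · rintro ⟨h, hh, rfl⟩
      rw [if_pos (by omega : k ≤ h + k)]
      simpa using hh
  rw [hs, Finset.prod_image (fun a _ b _ hab => by omega)]
  exact Finset.prod_congr rfl fun h _ => by rw [show n + (h + k) = n + k + h by omega]

private lemma LamProd_zero (P : Set ℕ) (n : ℕ) : LamProd P 0 n = 1 := by
  unfold LamProd
  rw [Polynomial.support_zero, Finset.prod_empty]

private lemma LamProd_mul (P : Set ℕ) (f g : Polynomial (ZMod 2)) (n : ℕ) :
    LamProd P (f * g) n = ∏ k ∈ g.support, LamProd P f (n + k) := by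
  have hone : ∀ a : ZMod 2, a ≠ 0 → a = 1 := by decide
  have hg : g = ∑ k ∈ g.support, X ^ k := by
    conv_lhs => rw [Polynomial.as_sum_support g]
    refine Finset.sum_congr rfl fun k hk => ?_
    rw [Polynomial.X_pow_eq_monomial, hone _ (Polynomial.mem_support_iff.mp hk)]
  conv_lhs => rw [hg]
  -- now induct over an arbitrary finset
  have aux : ∀ s : Finset ℕ, LamProd P (f * ∑ k ∈ s, X ^ k) n = ∏ k ∈ s, LamProd P f (n + k) := by
    intro s
    induction s using Finset.induction_on with
    | empty => simp only [Finset.sum_empty, mul_zero, Finset.prod_empty, LamProd_zero]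
    | insert _ _ hmem ih =>
      rw [Finset.sum_insert hmem, Finset.prod_insert hmem, mul_add, LamProd_add, ih,
        show f * X ^ _ = f * X ^ _ from rfl, LamProd_mul_X_pow]
  exact aux g.support

private lemma key_identity (P : Set ℕ) (H : Finset ℕ) (hH : H.Nonempty) :
    ∃ a c : ℕ, 1 ≤ c ∧ ∃ K : Finset ℕ, ∀ n : ℕ,
      ∏ k ∈ K, LambdaPH P H (n + k) = lambdaP P (n + a) * lambdaP P (n + a + c) := by
  classical
  set f : Polynomial (ZMod 2) := ∑ h ∈ H, X ^ h with hfdef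
  have hsupp : f.support = H := by
    ext j
    simp only [Polynomial.mem_support_iff, hfdef, Polynomial.finset_sum_coeff,
      Polynomial.coeff_X_pow]
    rw [Finset.sum_ite_eq H j (fun _ => (1 : ZMod 2))]
    by_cases hj : j ∈ H <;> simp [hj]
  have hf : f ≠ 0 := by
    intro h0
    rw [h0, Polynomial.support_zero] at hsupp
    exact hH.ne_empty hsupp.symm
  obtain ⟨a, c, hc, g, hg⟩ := exists_binomial_mul f hf
  refine ⟨a, c, hc, g.support, fun n => ?_⟩
  have hPf : ∀ m, LamProd P f m = LambdaPH P H m := by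
    intro m; unfold LamProd LambdaPH; rw [hsupp]
  have h1 := LamProd_mul P f g n
  rw [hg] at h1
  have hbin : ((X : Polynomial (ZMod 2)) ^ a + X ^ (a + c)).support = {a, a + c} := by
    have := Polynomial.support_binomial (by omega : a ≠ a + c)
      (one_ne_zero : (1 : ZMod 2) ≠ 0) (one_ne_zero : (1 : ZMod 2) ≠ 0)
    simpa using this
  have h2 : LamProd P ((X : Polynomial (ZMod 2)) ^ a + X ^ (a + c)) n
      = lambdaP P (n + a) * lambdaP P (n + a + c) := by
    unfold LamProd
    rw [hbin, Finset.prod_pair (by omega : a ≠ a + c)]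
    rw [show n + (a + c) = n + a + c by omega]
  rw [h2] at h1
  calc ∏ k ∈ g.support, LambdaPH P H (n + k)
      = ∏ k ∈ g.support, LamProd P f (n + k) :=
        Finset.prod_congr rfl fun k _ => (hPf (n + k)).symm
    _ = lambdaP P (n + a) * lambdaP P (n + a + c) := h1.symm



private lemma abs_cesaro_le (P : Set ℕ) (H : Finset ℕ) (x : ℕ) : |cesaroAvg P H x| ≤ 1 := by
  unfold cesaroAvg
  rcases Nat.eq_zero_or_pos x with rfl | hx
  · simp
  · have hxR : (0 : ℝ) < x := by exact_mod_cast hx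
    rw [abs_div, abs_of_nonneg hxR.le, div_le_one hxR]
    calc |∑ n ∈ Finset.Icc 1 x, LambdaPH P H n|
        ≤ ∑ n ∈ Finset.Icc 1 x, |LambdaPH P H n| := Finset.abs_sum_le_sum_abs _ _
      _ = ∑ n ∈ Finset.Icc 1 x, 1 := by
          refine Finset.sum_congr rfl fun n _ => ?_
          rcases LambdaPH_cases P H n with h | h <;> rw [h] <;> norm_num
      _ = (x : ℝ) := by simp [Nat.card_Icc]

private lemma density_zero (P : Set ℕ) (H : Finset ℕ) (ε : ℝ) (hε : ε = 1 ∨ ε = -1)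
    (hconv : Tendsto (cesaroAvg P H) atTop (nhds ε)) :
    Tendsto (fun x : ℕ => (countIn {n | LambdaPH P H n ≠ ε} x : ℝ) / x) atTop (nhds 0) := by
  have hcount : ∀ x : ℕ, countIn {n | LambdaPH P H n ≠ ε} x
      = ((Finset.Icc 1 x).filter (fun n => LambdaPH P H n ≠ ε)).card := by
    intro x
    unfold countIn
    congr 1
    ext n
    simp [Set.mem_setOf_eq]
  have hid : ∀ x : ℕ, 1 ≤ x → (countIn {n | LambdaPH P H n ≠ ε} x : ℝ) / x
      = (1 - ε * cesaroAvg P H x) / 2 := by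
    intro x hx
    have hxR : (0 : ℝ) < x := by exact_mod_cast hx
    set b := ((Finset.Icc 1 x).filter (fun n => LambdaPH P H n ≠ ε)).card with hbdef
    have hsum : ∑ n ∈ Finset.Icc 1 x, LambdaPH P H n = ε * ((x : ℝ) - 2 * b) := by
      rw [← Finset.sum_filter_add_sum_filter_not (Finset.Icc 1 x)
        (fun n => LambdaPH P H n ≠ ε)]
      have e1 : ∑ n ∈ (Finset.Icc 1 x).filter (fun n => LambdaPH P H n ≠ ε),
          LambdaPH P H n = (b : ℝ) * (-ε) := by
        rw [Finset.sum_congr rfl (fun n hn => ?_), Finset.sum_const, nsmul_eq_mul, ← hbdef]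
        have hn' := (Finset.mem_filter.mp hn).2
        rcases LambdaPH_cases P H n with h | h <;> rcases hε with rfl | rfl <;>
          simp_all
      have e2 : ∑ n ∈ (Finset.Icc 1 x).filter (fun n => ¬LambdaPH P H n ≠ ε),
          LambdaPH P H n
          = (((Finset.Icc 1 x).filter (fun n => ¬LambdaPH P H n ≠ ε)).card : ℝ) * ε := by
        rw [Finset.sum_congr rfl (fun n hn => ?_), Finset.sum_const, nsmul_eq_mul]
        have hn' := (Finset.mem_filter.mp hn).2
        push_neg at hn'
        exact hn'
      have e3 : b + ((Finset.Icc 1 x).filter (fun n => ¬LambdaPH P H n ≠ ε)).card = x := by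
        rw [hbdef, Finset.card_filter_add_card_filter_not, Nat.card_Icc]
        omega
      have e3' : (((Finset.Icc 1 x).filter (fun n => ¬LambdaPH P H n ≠ ε)).card : ℝ)
          = (x : ℝ) - b := by
        have h4 := congrArg (fun m : ℕ => (m : ℝ)) e3
        push_cast at h4
        linarith
      rw [e1, e2, e3']
      ring
    rw [hcount x, ← hbdef]
    unfold cesaroAvg
    rw [hsum]
    rcases hε with rfl | rfl <;> field_simp <;> ring
  have hlim : Tendsto (fun x : ℕ => (1 - ε * cesaroAvg P H x) / 2) atTop (nhds 0) := by
    have h1 : Tendsto (fun x : ℕ => (1 - ε * cesaroAvg P H x) / 2) atTop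
        (nhds ((1 - ε * ε) / 2)) :=
      (tendsto_const_nhds.sub (tendsto_const_nhds.mul hconv)).div_const 2
    have h2 : (1 - ε * ε) / 2 = 0 := by rcases hε with rfl | rfl <;> norm_num
    rwa [h2] at h1
  refine Tendsto.congr' ?_ hlim
  filter_upwards [eventually_ge_atTop 1] with x hx
  exact (hid x hx).symm

private noncomputable def Tsum (P : Set ℕ) (c : ℕ) (y : ℕ) : ℝ :=
  ∑ n ∈ Finset.Icc 1 y, lambdaP P n * lambdaP P (n + c)

private lemma frac_lim (k : ℕ) : Tendsto (fun x : ℕ => ((x : ℝ) + k) / x) atTop (nhds 1) := by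
  have h1 : Tendsto (fun x : ℕ => 1 + (k : ℝ) / x) atTop (nhds (1 + 0)) :=
    tendsto_const_nhds.add (tendsto_const_div_atTop_nhds_zero_nat (k : ℝ))
  rw [add_zero] at h1
  refine Tendsto.congr' ?_ h1
  filter_upwards [eventually_ge_atTop 1] with x hx
  have hx0 : (x : ℝ) ≠ 0 := Nat.cast_ne_zero.mpr (by omega)
  field_simp

private lemma not_tendsto (P : Set ℕ) (H : Finset ℕ) (hH : H.Nonempty)
    (hMRP : ∀ c : ℕ, 1 ≤ c → Filter.limsup (fun x : ℕ =>
        |(∑ n ∈ Finset.Icc 1 x, lambdaP P n * lambdaP P (n + c)) / (x : ℝ)|)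
        Filter.atTop < 1)
    (ε : ℝ) (hε : ε = 1 ∨ ε = -1)
    (hconv : Tendsto (cesaroAvg P H) atTop (nhds ε)) : False := by
  classical
  obtain ⟨a, c, hc, K, hK⟩ := key_identity P H hH
  have hb : Tendsto (fun x : ℕ => (countIn {n | LambdaPH P H n ≠ ε} x : ℝ) / x)
      atTop (nhds 0) := density_zero P H ε hε hconv
  set B : Set ℕ := {n | LambdaPH P H n ≠ ε} with hBdef
  set σ : ℝ := ε ^ K.card with hσdef
  have hσ : σ = 1 ∨ σ = -1 := by
    rcases hε with rfl | rfl
    · left; simp [hσdef]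
    · rcases Nat.even_or_odd K.card with h | h
      · left; exact h.neg_one_pow
      · right; exact h.neg_one_pow
  have hσ2 : σ * σ = 1 := by rcases hσ with h | h <;> rw [h] <;> norm_num
  have ht_cases : ∀ n : ℕ, σ * (lambdaP P (n + a) * lambdaP P (n + a + c)) = 1 ∨
      σ * (lambdaP P (n + a) * lambdaP P (n + a + c)) = -1 := by
    intro n
    rcases hσ with h | h <;> rcases lambdaP_cases P (n + a) with h1 | h1 <;>
      rcases lambdaP_cases P (n + a + c) with h2 | h2 <;> rw [h, h1, h2] <;> norm_num
  have ht_good : ∀ n : ℕ, (∀ k ∈ K, LambdaPH P H (n + k) = ε) →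
      σ * (lambdaP P (n + a) * lambdaP P (n + a + c)) = 1 := by
    intro n hn
    have hp : ∏ k ∈ K, LambdaPH P H (n + k) = σ := by
      rw [Finset.prod_congr rfl hn, Finset.prod_const, hσdef]
    have hll : lambdaP P (n + a) * lambdaP P (n + a + c) = σ := by rw [← hK n]; exact hp
    rw [hll, hσ2]
  -- counting bound
  have hcard : ∀ x : ℕ,
      ((Finset.Icc 1 x).filter (fun n => ¬∀ k ∈ K, LambdaPH P H (n + k) = ε)).card
        ≤ ∑ k ∈ K, countIn B (x + k) := by
    intro x
    have hsub : (Finset.Icc 1 x).filter (fun n => ¬∀ k ∈ K, LambdaPH P H (n + k) = ε)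
        ⊆ K.biUnion (fun k => (Finset.Icc 1 x).filter
          (fun n => LambdaPH P H (n + k) ≠ ε)) := by
      intro n hn
      obtain ⟨hn1, hn2⟩ := Finset.mem_filter.mp hn
      push_neg at hn2
      obtain ⟨k, hk1, hk2⟩ := hn2
      exact Finset.mem_biUnion.mpr ⟨k, hk1, Finset.mem_filter.mpr ⟨hn1, hk2⟩⟩
    refine le_trans (Finset.card_le_card hsub) (le_trans Finset.card_biUnion_le
      (Finset.sum_le_sum fun k _ => ?_))
    unfold countIn
    apply Finset.card_le_card_of_injOn (fun n => n + k)
    · intro n hn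
      obtain ⟨hn1, hn2⟩ := Finset.mem_filter.mp hn
      obtain ⟨ha1, ha2⟩ := Finset.mem_Icc.mp hn1
      simp only [Finset.mem_coe, Finset.mem_filter, Finset.mem_Icc, hBdef, Set.mem_setOf_eq]
      exact ⟨⟨by omega, by omega⟩, hn2⟩
    · intro n _ m _ hnm
      have h' : n + k = m + k := hnm
      omega
  -- lower bound for U
  have hlow : ∀ x : ℕ, (x : ℝ) - 2 * ∑ k ∈ K, (countIn B (x + k) : ℝ)
      ≤ ∑ n ∈ Finset.Icc 1 x, σ * (lambdaP P (n + a) * lambdaP P (n + a + c)) := by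
    intro x
    rw [← Finset.sum_filter_add_sum_filter_not (Finset.Icc 1 x)
      (fun n => ∀ k ∈ K, LambdaPH P H (n + k) = ε)]
    have hgood : ∑ n ∈ (Finset.Icc 1 x).filter (fun n => ∀ k ∈ K, LambdaPH P H (n + k) = ε),
        σ * (lambdaP P (n + a) * lambdaP P (n + a + c))
        = (((Finset.Icc 1 x).filter (fun n => ∀ k ∈ K, LambdaPH P H (n + k) = ε)).card : ℝ) := by
      rw [Finset.sum_congr rfl (fun n hn => ht_good n ((Finset.mem_filter.mp hn).2)),
        Finset.sum_const, nsmul_eq_mul, mul_one]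
    have hbad : -((((Finset.Icc 1 x).filter
          (fun n => ¬∀ k ∈ K, LambdaPH P H (n + k) = ε)).card : ℝ))
        ≤ ∑ n ∈ (Finset.Icc 1 x).filter (fun n => ¬∀ k ∈ K, LambdaPH P H (n + k) = ε),
          σ * (lambdaP P (n + a) * lambdaP P (n + a + c)) := by
      have h5 := Finset.card_nsmul_le_sum
        ((Finset.Icc 1 x).filter (fun n => ¬∀ k ∈ K, LambdaPH P H (n + k) = ε))
        (fun n => σ * (lambdaP P (n + a) * lambdaP P (n + a + c))) (-1)
        (fun n _ => by
          show (-1 : ℝ) ≤ σ * (lambdaP P (n + a) * lambdaP P (n + a + c))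
          rcases ht_cases n with h | h <;> rw [h] <;> norm_num)
      simpa [nsmul_eq_mul] using h5
    have hcards : (((Finset.Icc 1 x).filter
          (fun n => ∀ k ∈ K, LambdaPH P H (n + k) = ε)).card : ℝ)
        = (x : ℝ) - (((Finset.Icc 1 x).filter
          (fun n => ¬∀ k ∈ K, LambdaPH P H (n + k) = ε)).card : ℝ) := by
      have h6 := Finset.card_filter_add_card_filter_not
        (s := Finset.Icc 1 x) (p := fun n => ∀ k ∈ K, LambdaPH P H (n + k) = ε)
      rw [Nat.card_Icc, Nat.add_sub_cancel] at h6
      have h7 := congrArg (fun m : ℕ => (m : ℝ)) h6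
      push_cast at h7
      linarith
    have hcount : ((((Finset.Icc 1 x).filter
          (fun n => ¬∀ k ∈ K, LambdaPH P H (n + k) = ε)).card : ℝ))
        ≤ ∑ k ∈ K, (countIn B (x + k) : ℝ) := by
      exact_mod_cast hcard x
    rw [hgood, hcards]
    linarith
  have hup : ∀ x : ℕ, ∑ n ∈ Finset.Icc 1 x, σ * (lambdaP P (n + a) * lambdaP P (n + a + c))
      ≤ (x : ℝ) := by
    intro x
    calc ∑ n ∈ Finset.Icc 1 x, σ * (lambdaP P (n + a) * lambdaP P (n + a + c))
        ≤ ∑ n ∈ Finset.Icc 1 x, 1 := Finset.sum_le_sum (fun n _ => by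
          rcases ht_cases n with h | h <;> rw [h] <;> norm_num)
      _ = (x : ℝ) := by simp [Nat.card_Icc]
  -- density terms go to zero
  have hD : ∀ k : ℕ, Tendsto (fun x : ℕ => (countIn B (x + k) : ℝ) / x) atTop (nhds 0) := by
    intro k
    have h1 : Tendsto (fun x : ℕ => (countIn B (x + k) : ℝ) / ((x : ℝ) + k))
        atTop (nhds 0) := by
      have h2 := hb.comp (tendsto_add_atTop_nat k)
      refine h2.congr fun x => ?_
      simp only [Function.comp]
      push_cast
      rfl
    have h3 := h1.mul (frac_lim k)
    rw [zero_mul] at h3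
    refine Tendsto.congr' ?_ h3
    filter_upwards [eventually_ge_atTop 1] with x hx
    have hx0 : (0 : ℝ) < x := Nat.cast_pos.mpr (by omega)
    have hxk : (0 : ℝ) < (x : ℝ) + k := by positivity
    field_simp
  have hsumD : Tendsto (fun x : ℕ => ∑ k ∈ K, (countIn B (x + k) : ℝ) / x) atTop (nhds 0) := by
    have h4 := tendsto_finset_sum K (fun k _ => hD k)
    simpa using h4
  -- U x / x → 1
  have hUlim : Tendsto (fun x : ℕ =>
      (∑ n ∈ Finset.Icc 1 x, σ * (lambdaP P (n + a) * lambdaP P (n + a + c))) / x)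
      atTop (nhds 1) := by
    refine tendsto_of_tendsto_of_tendsto_of_le_of_le'
      (g := fun x : ℕ => 1 - 2 * ∑ k ∈ K, (countIn B (x + k) : ℝ) / x)
      (h := fun _ : ℕ => (1 : ℝ)) ?_ tendsto_const_nhds ?_ ?_
    · have h1 : Tendsto (fun x : ℕ => 1 - 2 * ∑ k ∈ K, (countIn B (x + k) : ℝ) / x) atTop
          (nhds (1 - 2 * 0)) := tendsto_const_nhds.sub (tendsto_const_nhds.mul hsumD)
      simpa using h1
    · filter_upwards [eventually_ge_atTop 1] with x hx
      have hx0 : (0 : ℝ) < x := Nat.cast_pos.mpr (by omega)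
      calc (1 : ℝ) - 2 * ∑ k ∈ K, (countIn B (x + k) : ℝ) / x
          = ((x : ℝ) - 2 * ∑ k ∈ K, (countIn B (x + k) : ℝ)) / x := by
            rw [← Finset.sum_div]
            field_simp
        _ ≤ _ := (div_le_div_iff_of_pos_right hx0).mpr (hlow x)
    · filter_upwards [eventually_ge_atTop 1] with x hx
      have hx0 : (0 : ℝ) < x := Nat.cast_pos.mpr (by omega)
      rw [div_le_one hx0]
      exact hup x
  -- index shift identity
  have hshift : ∀ x : ℕ, ∑ n ∈ Finset.Icc 1 x, lambdaP P (n + a) * lambdaP P (n + a + c)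
      = Tsum P c (x + a) - Tsum P c a := by
    intro x
    have hsplit : (∑ n ∈ Finset.Icc 1 a, lambdaP P n * lambdaP P (n + c))
        + ∑ n ∈ Finset.Icc (a + 1) (a + x), lambdaP P n * lambdaP P (n + c)
        = ∑ n ∈ Finset.Icc 1 (a + x), lambdaP P n * lambdaP P (n + c) := by
      have h8 := Finset.sum_Ico_consecutive (fun n => lambdaP P n * lambdaP P (n + c))
        (by omega : 1 ≤ a + 1) (by omega : a + 1 ≤ a + x + 1)
      simpa [Finset.Ico_add_one_right_eq_Icc] using h8
    have hmap : ∑ n ∈ Finset.Icc (a + 1) (a + x), lambdaP P n * lambdaP P (n + c)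
        = ∑ n ∈ Finset.Icc 1 x, lambdaP P (n + a) * lambdaP P (n + a + c) := by
      rw [show (Finset.Icc (a + 1) (a + x)) =
        Finset.map (addLeftEmbedding a) (Finset.Icc 1 x) from
        (Finset.map_add_left_Icc 1 x a).symm, Finset.sum_map]
      refine Finset.sum_congr rfl fun n _ => ?_
      have h9 : addLeftEmbedding a n = a + n := rfl
      rw [h9, Nat.add_comm a n]
    have hTxa : Tsum P c (x + a) = ∑ n ∈ Finset.Icc 1 (a + x),
        lambdaP P n * lambdaP P (n + c) := by
      unfold Tsum
      rw [Nat.add_comm x a]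
    rw [hTxa, ← hsplit, hmap]
    unfold Tsum
    ring
  -- U in terms of Tsum
  have hUT : ∀ x : ℕ, Tsum P c (x + a)
      = σ * (∑ n ∈ Finset.Icc 1 x, σ * (lambdaP P (n + a) * lambdaP P (n + a + c)))
        + Tsum P c a := by
    intro x
    have h1 : ∑ n ∈ Finset.Icc 1 x, σ * (lambdaP P (n + a) * lambdaP P (n + a + c))
        = σ * (Tsum P c (x + a) - Tsum P c a) := by
      rw [← Finset.mul_sum, hshift x]
    rw [h1, ← mul_assoc, hσ2]
    ring
  -- |Tsum/y| ≤ 1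
  have hGle : ∀ y : ℕ, |Tsum P c y / (y : ℝ)| ≤ 1 := by
    intro y
    rcases Nat.eq_zero_or_pos y with rfl | hy
    · simp [Tsum]
    · have hy0 : (0 : ℝ) < y := Nat.cast_pos.mpr hy
      rw [abs_div, abs_of_nonneg hy0.le, div_le_one hy0]
      calc |Tsum P c y| ≤ ∑ n ∈ Finset.Icc 1 y, |lambdaP P n * lambdaP P (n + c)| := by
            unfold Tsum; exact Finset.abs_sum_le_sum_abs _ _
        _ = ∑ n ∈ Finset.Icc 1 y, 1 := Finset.sum_congr rfl fun n _ => by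
            rcases lambdaP_cases P n with h1 | h1 <;>
              rcases lambdaP_cases P (n + c) with h2 | h2 <;> rw [h1, h2] <;> norm_num
        _ = (y : ℝ) := by simp [Nat.card_Icc]
  -- limit of Tsum (x+a)/(x+a)
  have hTlim : Tendsto (fun x : ℕ => Tsum P c (x + a) / ((x : ℝ) + a)) atTop (nhds σ) := by
    have hA : Tendsto (fun x : ℕ => σ *
        ((∑ n ∈ Finset.Icc 1 x, σ * (lambdaP P (n + a) * lambdaP P (n + a + c))) / x))
        atTop (nhds σ) := by
      have h1 : Tendsto (fun x : ℕ => σ *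
          ((∑ n ∈ Finset.Icc 1 x, σ * (lambdaP P (n + a) * lambdaP P (n + a + c))) / x))
          atTop (nhds (σ * 1)) := tendsto_const_nhds.mul hUlim
      simpa using h1
    have hBfrac : Tendsto (fun x : ℕ => (x : ℝ) / ((x : ℝ) + a)) atTop (nhds 1) := by
      have h2 := (frac_lim a).inv₀ one_ne_zero
      rw [inv_one] at h2
      refine Tendsto.congr' ?_ h2
      filter_upwards [eventually_ge_atTop 1] with x hx
      rw [inv_div]
    have hC : Tendsto (fun x : ℕ => Tsum P c a / ((x : ℝ) + a)) atTop (nhds 0) := by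
      have h3 := (tendsto_const_div_atTop_nhds_zero_nat (Tsum P c a)).comp
        (tendsto_add_atTop_nat a)
      refine h3.congr fun x => ?_
      simp only [Function.comp]
      push_cast
      rfl
    have hmain : Tendsto (fun x : ℕ => σ *
        ((∑ n ∈ Finset.Icc 1 x, σ * (lambdaP P (n + a) * lambdaP P (n + a + c))) / x)
          * ((x : ℝ) / ((x : ℝ) + a)) + Tsum P c a / ((x : ℝ) + a))
        atTop (nhds (σ * 1 + 0)) := (hA.mul hBfrac).add hC
    rw [mul_one, add_zero] at hmain
    refine Tendsto.congr' ?_ hmain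
    filter_upwards [eventually_ge_atTop 1] with x hx
    have hx0 : (0 : ℝ) < x := Nat.cast_pos.mpr (by omega)
    have hxa : (0 : ℝ) < (x : ℝ) + a := by positivity
    rw [hUT x]
    field_simp
  have hGlim : Tendsto (fun x : ℕ => |Tsum P c (x + a) / ((x + a : ℕ) : ℝ)|)
      atTop (nhds 1) := by
    have h1 := hTlim.abs
    have hσabs : |σ| = 1 := by rcases hσ with h | h <;> rw [h] <;> norm_num
    rw [hσabs] at h1
    refine h1.congr fun x => ?_
    push_cast
    rfl
  -- contradiction
  have hls : Filter.limsup (fun y : ℕ => |Tsum P c y / (y : ℝ)|) atTop < 1 := hMRP c hc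
  obtain ⟨r, hr1, hr2⟩ := exists_between hls
  have hevlt : ∀ᶠ y in atTop, |Tsum P c y / (y : ℝ)| < r :=
    Filter.eventually_lt_of_limsup_lt hr1 (Filter.isBoundedUnder_of ⟨1, hGle⟩)
  have hev2 : ∀ᶠ x in atTop, |Tsum P c (x + a) / ((x + a : ℕ) : ℝ)| < r :=
    (tendsto_add_atTop_nat a).eventually hevlt
  have hev3 : ∀ᶠ x in atTop, r < |Tsum P c (x + a) / ((x + a : ℕ) : ℝ)| :=
    hGlim.eventually (eventually_gt_nhds hr2)
  obtain ⟨x, h1, h2⟩ := (hev2.and hev3).exists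
  linarith


/-- Assuming the Matomäki–Radziwiłł two-point bound, for non-empty `P`
(so `λ_P` is non-constant) and non-empty finite `H`, the liminf of the Cesàro averages
of `Λ_P^H` is `< 1` and the limsup is `> -1`. -/
theorem stmt_4
    (hMR : ∀ Q : Set ℕ, (∀ q ∈ Q, Nat.Prime q) → Q.Nonempty → ∀ h : ℕ, 1 ≤ h →
      Filter.limsup (fun x : ℕ =>
        |(∑ n ∈ Finset.Icc 1 x, lambdaP Q n * lambdaP Q (n + h)) / (x : ℝ)|)
        Filter.atTop < 1)
    (P : Set ℕ) (hP : ∀ q ∈ P, Nat.Prime q) (hPne : P.Nonempty)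
    (H : Finset ℕ) (hH : H.Nonempty) :
    Filter.liminf (cesaroAvg P H) Filter.atTop < 1 ∧
    Filter.limsup (cesaroAvg P H) Filter.atTop > -1 := by
  have hMRP : ∀ c : ℕ, 1 ≤ c → Filter.limsup (fun x : ℕ =>
      |(∑ n ∈ Finset.Icc 1 x, lambdaP P n * lambdaP P (n + c)) / (x : ℝ)|)
      Filter.atTop < 1 := fun c hc => hMR P hP hPne c hc
  have hbound : ∀ x, |cesaroAvg P H x| ≤ 1 := abs_cesaro_le P H
  have hbb : IsBoundedUnder (· ≤ ·) atTop (cesaroAvg P H) :=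
    Filter.isBoundedUnder_of ⟨1, fun x => (abs_le.mp (hbound x)).2⟩
  have hbb' : IsBoundedUnder (· ≥ ·) atTop (cesaroAvg P H) :=
    Filter.isBoundedUnder_of ⟨-1, fun x => (abs_le.mp (hbound x)).1⟩
  constructor
  · by_contra hcon
    push_neg at hcon
    have hls : Filter.limsup (cesaroAvg P H) atTop ≤ 1 :=
      Filter.limsup_le_of_le hbb'.isCoboundedUnder_le
        (Filter.Eventually.of_forall fun x => (abs_le.mp (hbound x)).2)
    have htend : Tendsto (cesaroAvg P H) atTop (nhds 1) :=
      tendsto_of_le_liminf_of_limsup_le hcon hls hbb hbb'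
    exact not_tendsto P H hH hMRP 1 (Or.inl rfl) htend
  · by_contra hcon
    push_neg at hcon
    have hli : (-1 : ℝ) ≤ Filter.liminf (cesaroAvg P H) atTop :=
      Filter.le_liminf_of_le hbb.isCoboundedUnder_ge
        (Filter.Eventually.of_forall fun x => (abs_le.mp (hbound x)).1)
    have htend : Tendsto (cesaroAvg P H) atTop (nhds (-1)) :=
      tendsto_of_le_liminf_of_limsup_le hli hcon hbb hbb'
    exact not_tendsto P H hH hMRP (-1) (Or.inr rfl) htend
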